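/- Let N = {1,…,n}, let E₁, E₂ ⊆ {(i,j) ∈ N × N : i ≠ j}, and let γ⁽¹⁾ : E₁ → ℝ and γ⁽²⁾ : E₂ → ℝ be such that for k = 1, 2 the polyhedron P_k = {y ∈ ℝ^n : y_j − y_i ≤ γ⁽ᵏ⁾_{ij} for all (i,j) ∈ E_k} is nonempty and L-convex. For i ≠ j in N and k = 1, 2, let λ(i,j;G_k) ∈ ℝ ∪ {+∞} denote the minimum total γ⁽ᵏ⁾-length of a directed path from i to j in the directed graph G_k = (N, E_k) with edge lengths γ⁽ᵏ⁾ (equal to +∞ if no such path exists). Then the L₂-convex polyhedron P = P₁ + P₂ equals the set of all x ∈ ℝ^n such that for every m ≥ 1 and every choice of 2m distinct indices i₁,…,i_m, j₁,…,j_m ∈ N (with the convention i_{m+1} = i₁): Σ_{r=1}^{m}(x_{j_r} − x_{i_r}) ≤ Σ_{r=1}^{m}(λ(i_r, j_r; G₁) + λ(i_{r+1}, j_r; G₂)). -/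

import Mathlib

open Pointwise

/-- A polyhedron in `ℝⁿ` is the solution set of a finite system of linear
inequalities. -/
def IsPolyhedron {n : ℕ} (P : Set (Fin n → ℝ)) : Prop :=
  ∃ (m : ℕ) (A : Fin m → Fin n → ℝ) (b : Fin m → ℝ),
    P = {x | ∀ i, ∑ j, A i j * x j ≤ b i}

/-- A nonempty polyhedron `P ⊆ ℝⁿ` is L-convex if it is closed under
componentwise max/min and under translation by real multiples of `𝟏`. -/
def IsLConvexPoly {n : ℕ} (P : Set (Fin n → ℝ)) : Prop :=
  IsPolyhedron P ∧ P.Nonempty ∧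
  (∀ x ∈ P, ∀ y ∈ P, x ⊔ y ∈ P ∧ x ⊓ y ∈ P) ∧
  (∀ x ∈ P, ∀ μ : ℝ, (x + fun _ => μ) ∈ P)

/-- `λ(i,j;G)`: the minimum total `γ`-length of a directed path from `i` to `j`
in the directed graph `G = (N, E)` with edge lengths `γ` (in `ℝ ∪ {+∞}`,
equal to `+∞` if no path exists, via `sInf ∅ = ⊤` in `EReal`). -/
noncomputable def pathLambda {n : ℕ} (E : Finset (Fin n × Fin n))
    (γ : Fin n × Fin n → ℝ) (i j : Fin n) : EReal :=
  sInf {v : EReal | ∃ (t : ℕ) (w : Fin (t + 1) → Fin n),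
    w 0 = i ∧ w (Fin.last t) = j ∧
    (∀ s : Fin t, (w s.castSucc, w s.succ) ∈ E) ∧
    v = ((∑ s : Fin t, γ (w s.castSucc, w s.succ) : ℝ) : EReal)}

section AuxCycleDescription
open Finset

section Walks
variable {n : ℕ}

/-- `p` is a walk of length `t` (as a `ℕ`-indexed sequence) for relation `R`. -/
def NW (R : Fin n → Fin n → Prop) (t : ℕ) (p : ℕ → Fin n) : Prop :=
  ∀ k < t, R (p k) (p (k + 1))

/-- total weight of the length-`t` walk `p` under edge weights `f`. -/
def NWt (f : Fin n → Fin n → ℝ) (t : ℕ) (p : ℕ → Fin n) : ℝ :=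
  ∑ k ∈ range t, f (p k) (p (k + 1))

lemma NW_congr {R : Fin n → Fin n → Prop} {t : ℕ} {p q : ℕ → Fin n}
    (h : ∀ k ≤ t, p k = q k) (hp : NW R t p) : NW R t q := by
  intro k hk
  rw [← h k (by omega), ← h (k+1) (by omega)]
  exact hp k hk

lemma NWt_congr {f : Fin n → Fin n → ℝ} {t : ℕ} {p q : ℕ → Fin n}
    (h : ∀ k ≤ t, p k = q k) : NWt f t p = NWt f t q := by
  unfold NWt
  refine Finset.sum_congr rfl fun k hk => ?_
  rw [mem_range] at hk
  rw [h k (by omega), h (k+1) (by omega)]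

/-- walk bound: a feasible potential `y` bounds walk weights from below. -/
lemma NW_bound {R : Fin n → Fin n → Prop} {f : Fin n → Fin n → ℝ} {y : Fin n → ℝ}
    (hy : ∀ a b, R a b → y b - y a ≤ f a b) :
    ∀ t p, NW R t p → y (p t) - y (p 0) ≤ NWt f t p := by
  intro t
  induction t with
  | zero => intro p _; simp [NWt]
  | succ t ih =>
    intro p hp
    have h1 := ih p (fun k hk => hp k (by omega))
    have h2 := hy _ _ (hp t (by omega))
    have : NWt f (t+1) p = NWt f t p + f (p t) (p (t+1)) := Finset.sum_range_succ _ t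
    rw [this]; linarith

/-- cycle-removal: any walk can be shortened to length `≤ n` without increasing
weight, keeping the endpoints, provided closed subwalks have nonnegative weight. -/
lemma NW_removal {R : Fin n → Fin n → Prop} {f : Fin n → Fin n → ℝ}
    (hcyc : ∀ t p, NW R t p → p 0 = p t → 0 ≤ NWt f t p) :
    ∀ t p, NW R t p →
      ∃ t' p', t' ≤ n ∧ NW R t' p' ∧ p' 0 = p 0 ∧ p' t' = p t ∧
        NWt f t' p' ≤ NWt f t p := by
  intro t
  induction t using Nat.strong_induction_on with
  | _ t ih =>
  intro p hp
  by_cases hinj : Function.Injective (fun s : Fin (t+1) => p s.val)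
  · have hcard : t + 1 ≤ n := by
      simpa using Fintype.card_le_of_injective _ hinj
    exact ⟨t, p, by omega, hp, rfl, rfl, le_refl _⟩
  · rw [Function.not_injective_iff] at hinj
    obtain ⟨s₁, s₂, hval, hne⟩ := hinj
    obtain ⟨A, B, hAB, hpAB, hBt⟩ :
        ∃ A B : ℕ, A < B ∧ p A = p B ∧ B ≤ t := by
      rcases lt_or_gt_of_ne (fun h => hne (Fin.ext h) : s₁.val ≠ s₂.val) with h | h
      · exact ⟨s₁.val, s₂.val, h, hval, by omega⟩
      · exact ⟨s₂.val, s₁.val, h, hval.symm, by omega⟩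
    set d := B - A with hd
    have hrem : 0 ≤ NWt f d (fun k => p (A + k)) := by
      refine hcyc d _ (fun k hk => ?_) ?_
      · show R (p (A + k)) (p (A + (k + 1)))
        rw [show A + (k + 1) = A + k + 1 by omega]
        exact hp (A + k) (by omega)
      · show p (A + 0) = p (A + d)
        rw [show A + 0 = A by omega, show A + d = B by omega]
        exact hpAB
    set t' := t - d with ht'
    set p' : ℕ → Fin n := fun k => if k ≤ A then p k else p (k + d) with hp'
    have hval' : ∀ k, A < k → p' k = p (k + d) := by
      intro k hk; simp only [hp']; rw [if_neg (by omega)]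
    have hvalA : ∀ k, k ≤ A → p' k = p k := by
      intro k hk; simp only [hp']; rw [if_pos hk]
    have hNW' : NW R t' p' := by
      intro k hk
      rcases Nat.lt_or_ge k A with h | h
      · rw [hvalA k (by omega), hvalA (k+1) (by omega)]
        exact hp k (by omega)
      · rcases Nat.eq_or_lt_of_le h with h' | h'
        · have hk' : k = A := h'.symm
          subst hk'
          rw [hvalA k (by omega), hval' (k+1) (by omega), hpAB,
            show k + 1 + d = B + 1 by omega]
          exact hp B (by omega)
        · rw [hval' k h', hval' (k+1) (by omega), show k + 1 + d = k + d + 1 by omega]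
          exact hp (k + d) (by omega)
    have hend : p' t' = p t := by
      rcases Nat.lt_or_ge A t' with h | h
      · rw [hval' t' h, show t' + d = t by omega]
      · have h1 : t' = A := by omega
        have h2 : B = t := by omega
        rw [hvalA t' (by omega), h1, hpAB, h2]
    have hw : NWt f t' p' + NWt f d (fun k => p (A + k)) ≤ NWt f t p := by
      have split1 : NWt f t p
          = (∑ k ∈ range A, f (p k) (p (k+1)))
            + ((∑ k ∈ range d, f (p (A + k)) (p (A + k + 1)))
              + ∑ k ∈ range (t - B), f (p (B + k)) (p (B + k + 1))) := by
        have e1 : NWt f t p = ∑ k ∈ range (A + (d + (t - B))), f (p k) (p (k+1)) := by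
          rw [show A + (d + (t - B)) = t by omega]; rfl
        rw [e1, Finset.sum_range_add, Finset.sum_range_add]
        congr 1
        congr 1
        refine Finset.sum_congr rfl fun k _ => by
          rw [show A + (d + k) = B + k by omega]
      have split2 : NWt f t' p'
          = (∑ k ∈ range A, f (p k) (p (k+1)))
            + ∑ k ∈ range (t - B), f (p (B + k)) (p (B + k + 1)) := by
        have e1 : NWt f t' p' = ∑ k ∈ range (A + (t - B)), f (p' k) (p' (k+1)) := by
          rw [show A + (t - B) = t' by omega]; rfl
        rw [e1, Finset.sum_range_add]
        congr 1
        · refine Finset.sum_congr rfl fun k hk => ?_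
          rw [mem_range] at hk
          rw [hvalA k (by omega), hvalA (k+1) (by omega)]
        · refine Finset.sum_congr rfl fun k hk => ?_
          rw [mem_range] at hk
          rcases Nat.eq_zero_or_pos k with h0 | h0
          · subst h0
            rw [hvalA (A + 0) (by omega), hval' (A + 0 + 1) (by omega),
              show A + 0 = A by omega, hpAB, show A + 0 + 1 + d = B + 0 + 1 by omega,
              show B + 0 = B by omega]
          · rw [hval' (A + k) (by omega), hval' (A + k + 1) (by omega),
              show A + k + d = B + k by omega, show A + k + 1 + d = B + k + 1 by omega]
      have hmid : NWt f d (fun k => p (A + k))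
          = ∑ k ∈ range d, f (p (A + k)) (p (A + k + 1)) := by
        refine Finset.sum_congr rfl fun k _ => ?_
        show f (p (A + k)) (p (A + (k + 1))) = _
        rw [show A + (k + 1) = A + k + 1 by omega]
      rw [split1, split2, hmid]
      linarith
    obtain ⟨t'', p'', h1, h2, h3, h4, h5⟩ := ih t' (by omega) p' hNW'
    refine ⟨t'', p'', h1, h2, ?_, ?_, ?_⟩
    · rw [h3, hvalA 0 (by omega)]
    · rw [h4, hend]
    · linarith

end Walks

section Lambda
variable {n : ℕ}

/-- the defining set of `pathLambda`. -/
def LamSet (E : Finset (Fin n × Fin n)) (γ : Fin n × Fin n → ℝ) (i j : Fin n) :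
    Set EReal :=
  {v : EReal | ∃ (t : ℕ) (w : Fin (t + 1) → Fin n),
    w 0 = i ∧ w (Fin.last t) = j ∧
    (∀ s : Fin t, (w s.castSucc, w s.succ) ∈ E) ∧
    v = ((∑ s : Fin t, γ (w s.castSucc, w s.succ) : ℝ) : EReal)}

def ERel (E : Finset (Fin n × Fin n)) : Fin n → Fin n → Prop := fun a b => (a, b) ∈ E

def Eγ (γ : Fin n × Fin n → ℝ) : Fin n → Fin n → ℝ := fun a b => γ (a, b)

lemma pathLambda_def (E : Finset (Fin n × Fin n)) (γ : Fin n × Fin n → ℝ)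
    (i j : Fin n) : pathLambda E γ i j = sInf (LamSet E γ i j) := rfl

lemma mem_LamSet {E : Finset (Fin n × Fin n)} {γ : Fin n × Fin n → ℝ}
    {t : ℕ} {p : ℕ → Fin n} (hp : NW (ERel E) t p) :
    ((NWt (Eγ γ) t p : ℝ) : EReal) ∈ LamSet E γ (p 0) (p t) := by
  refine ⟨t, fun s => p s.val, rfl, rfl, ?_, ?_⟩
  · intro s
    have := hp s.val s.isLt
    simpa [Fin.coe_castSucc, Fin.val_succ, ERel] using this
  · congr 1
    show NWt (Eγ γ) t p = _
    unfold NWt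
    rw [← Fin.sum_univ_eq_sum_range (fun k => Eγ γ (p k) (p (k+1))) t]
    exact Finset.sum_congr rfl fun s _ => by
      simp [Fin.coe_castSucc, Fin.val_succ, Eγ]

lemma lam_le_walk {E : Finset (Fin n × Fin n)} {γ : Fin n × Fin n → ℝ}
    {t : ℕ} {p : ℕ → Fin n} (hp : NW (ERel E) t p) :
    pathLambda E γ (p 0) (p t) ≤ ((NWt (Eγ γ) t p : ℝ) : EReal) :=
  sInf_le (mem_LamSet hp)

lemma walk_of_mem {E : Finset (Fin n × Fin n)} {γ : Fin n × Fin n → ℝ}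
    {i j : Fin n} {v : EReal} (hv : v ∈ LamSet E γ i j) :
    ∃ (t : ℕ) (p : ℕ → Fin n), NW (ERel E) t p ∧ p 0 = i ∧ p t = j ∧
      v = ((NWt (Eγ γ) t p : ℝ) : EReal) := by
  obtain ⟨t, w, h0, hl, he, hveq⟩ := hv
  set p : ℕ → Fin n := fun k => w ⟨min k t, by omega⟩ with hpdef
  have pk_eq : ∀ (k : ℕ) (hk : k ≤ t), p k = w ⟨k, by omega⟩ := by
    intro k hk
    simp only [hpdef]
    congr 1
    exact Fin.ext (by simp; omega)
  refine ⟨t, p, ?_, ?_, ?_, ?_⟩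
  · intro k hk
    have e1 : w (Fin.castSucc ⟨k, hk⟩) = p k := by
      rw [pk_eq k (by omega)]; congr 1
    have e2 : w (Fin.succ ⟨k, hk⟩) = p (k + 1) := by
      rw [pk_eq (k+1) (by omega)]; congr 1
    have := he ⟨k, hk⟩
    rw [e1, e2] at this
    exact this
  · rw [pk_eq 0 (by omega)]
    rw [show (⟨0, by omega⟩ : Fin (t+1)) = 0 from rfl]
    exact h0
  · rw [pk_eq t (by omega)]
    rw [show (⟨t, by omega⟩ : Fin (t+1)) = Fin.last t from rfl]
    exact hl
  · rw [hveq]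
    congr 1
    unfold NWt
    rw [← Fin.sum_univ_eq_sum_range (fun k => Eγ γ (p k) (p (k+1))) t]
    refine Finset.sum_congr rfl fun s _ => ?_
    have e1 : w (Fin.castSucc s) = p s.val := by
      rw [pk_eq s.val (by omega)]; congr 1
    have e2 : w (Fin.succ s) = p (s.val + 1) := by
      rw [pk_eq (s.val+1) (by omega)]; congr 1
    rw [e1, e2]
    rfl

lemma le_lam {E : Finset (Fin n × Fin n)} {γ : Fin n × Fin n → ℝ} {y : Fin n → ℝ}
    (hy : ∀ e ∈ E, y e.2 - y e.1 ≤ γ e) (i j : Fin n) :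
    ((y j - y i : ℝ) : EReal) ≤ pathLambda E γ i j := by
  rw [pathLambda_def]
  refine le_sInf fun v hv => ?_
  obtain ⟨t, p, hp, h0, ht, hveq⟩ := walk_of_mem hv
  rw [hveq, EReal.coe_le_coe_iff]
  have := NW_bound (y := y) (f := Eγ γ) (fun a b hab => hy (a,b) hab) t p hp
  rw [h0, ht] at this
  exact this

lemma lam_ne_bot {E : Finset (Fin n × Fin n)} {γ : Fin n × Fin n → ℝ} {y : Fin n → ℝ}
    (hy : ∀ e ∈ E, y e.2 - y e.1 ≤ γ e) (i j : Fin n) :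
    pathLambda E γ i j ≠ ⊥ :=
  (lt_of_lt_of_le (EReal.bot_lt_coe _) (le_lam hy i j)).ne'

lemma lam_self_nonneg {E : Finset (Fin n × Fin n)} {γ : Fin n × Fin n → ℝ}
    {y : Fin n → ℝ} (hy : ∀ e ∈ E, y e.2 - y e.1 ≤ γ e) (a : Fin n) :
    (0 : EReal) ≤ pathLambda E γ a a := by
  have := le_lam hy a a
  simpa using this

lemma lam_hcyc {E : Finset (Fin n × Fin n)} {γ : Fin n × Fin n → ℝ} {y : Fin n → ℝ}
    (hy : ∀ e ∈ E, y e.2 - y e.1 ≤ γ e) :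
    ∀ t p, NW (ERel E) t p → p 0 = p t → 0 ≤ NWt (Eγ γ) t p := by
  intro t p hp he
  have := NW_bound (y := y) (f := Eγ γ) (fun a b hab => hy (a,b) hab) t p hp
  rw [he] at this
  linarith

lemma lam_attained {E : Finset (Fin n × Fin n)} {γ : Fin n × Fin n → ℝ}
    {y : Fin n → ℝ} (hy : ∀ e ∈ E, y e.2 - y e.1 ≤ γ e) (i j : Fin n)
    (h : pathLambda E γ i j ≠ ⊤) :
    ∃ (t : ℕ) (p : ℕ → Fin n), t ≤ n ∧ NW (ERel E) t p ∧ p 0 = i ∧ p t = j ∧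
      pathLambda E γ i j = ((NWt (Eγ γ) t p : ℝ) : EReal) := by
  classical
  have hSne : ∃ v, v ∈ LamSet E γ i j := by
    by_contra hS
    push_neg at hS
    exact h (sInf_eq_top.mpr (fun a ha => absurd ha (hS a)))
  -- the finite set of weights of bounded walks from i to j
  set natify : (Σ tq : Fin (n+1), (Fin (tq.val + 1) → Fin n)) → (ℕ → Fin n) :=
    fun q => fun k => q.2 ⟨min k q.1.val, by omega⟩ with hnatify
  set B : Finset ℝ :=
    (Finset.univ.filter (fun q : Σ tq : Fin (n+1), (Fin (tq.val + 1) → Fin n) =>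
      NW (ERel E) q.1.val (natify q) ∧ natify q 0 = i ∧ natify q q.1.val = j)).image
      (fun q => NWt (Eγ γ) q.1.val (natify q)) with hB
  -- a bounded walk exists (hence B is nonempty)
  have key : ∀ (t₂ : ℕ) (p₂ : ℕ → Fin n), NW (ERel E) t₂ p₂ → p₂ 0 = i → p₂ t₂ = j →
      ∃ u ∈ B, u ≤ NWt (Eγ γ) t₂ p₂ := by
    intro t₂ p₂ hp₂ h0 ht
    obtain ⟨t₃, p₃, hle, hp₃, h0', ht', hw⟩ := NW_removal (lam_hcyc hy) t₂ p₂ hp₂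
    set q : Σ tq : Fin (n+1), (Fin (tq.val + 1) → Fin n) :=
      ⟨⟨t₃, by omega⟩, fun s => p₃ s.val⟩ with hq
    have hagree : ∀ k ≤ t₃, p₃ k = natify q k := by
      intro k hk
      simp only [hnatify, hq]
      congr 1
      simp; omega
    refine ⟨NWt (Eγ γ) q.1.val (natify q), ?_, ?_⟩
    · rw [hB]
      refine Finset.mem_image.mpr ⟨q, Finset.mem_filter.mpr ⟨Finset.mem_univ _, ?_, ?_, ?_⟩, rfl⟩
      · exact NW_congr hagree hp₃
      · have hh := hagree 0 (by omega)
        rw [h0', h0] at hh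
        exact hh.symm
      · show natify q ↑q.fst = j
        have hh := hagree t₃ (by omega)
        rw [ht', ht] at hh
        exact hh.symm
    · have : NWt (Eγ γ) q.1.val (natify q) = NWt (Eγ γ) t₃ p₃ :=
        (NWt_congr hagree).symm
      rw [this]
      exact hw
  obtain ⟨v₀, hv₀⟩ := hSne
  obtain ⟨t₀, p₀, hp₀, h00, ht0, _⟩ := walk_of_mem hv₀
  obtain ⟨u₀, hu₀B, _⟩ := key t₀ p₀ hp₀ h00 ht0
  have hBne : B.Nonempty := ⟨u₀, hu₀B⟩
  set u := B.min' hBne with hu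
  obtain ⟨qs, hqs, hqeq⟩ := Finset.mem_image.mp (B.min'_mem hBne)
  obtain ⟨-, hqs1, hqs2, hqs3⟩ := Finset.mem_filter.mp hqs
  have hle1 : pathLambda E γ i j ≤ ((u : ℝ) : EReal) := by
    rw [← hqs2, ← hqs3, hu, ← hqeq]
    exact lam_le_walk hqs1
  have hle2 : ((u : ℝ) : EReal) ≤ pathLambda E γ i j := by
    rw [pathLambda_def]
    refine le_sInf fun v hv => ?_
    obtain ⟨t₂, p₂, hp₂, h0, ht, hveq⟩ := walk_of_mem hv
    obtain ⟨u', hu'B, hu'le⟩ := key t₂ p₂ hp₂ h0 ht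
    rw [hveq, EReal.coe_le_coe_iff]
    exact le_trans (Finset.min'_le _ _ hu'B) hu'le
  refine ⟨qs.1.val, natify qs, by omega, hqs1, hqs2, hqs3, ?_⟩
  rw [le_antisymm hle1 hle2, hu, ← hqeq]

/-- triangle inequality (in `toReal` form) for `pathLambda`. -/
lemma lam_triangle {E : Finset (Fin n × Fin n)} {γ : Fin n × Fin n → ℝ}
    {y : Fin n → ℝ} (hy : ∀ e ∈ E, y e.2 - y e.1 ≤ γ e) (a b c : Fin n)
    (hab : pathLambda E γ a b ≠ ⊤) (hbc : pathLambda E γ b c ≠ ⊤) :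
    pathLambda E γ a c ≠ ⊤ ∧
      (pathLambda E γ a c).toReal ≤
        (pathLambda E γ a b).toReal + (pathLambda E γ b c).toReal := by
  obtain ⟨t₁, p₁, _, hp₁, h10, h1t, heq1⟩ := lam_attained hy a b hab
  obtain ⟨t₂, p₂, _, hp₂, h20, h2t, heq2⟩ := lam_attained hy b c hbc
  set p : ℕ → Fin n := fun k => if k ≤ t₁ then p₁ k else p₂ (k - t₁) with hpdef
  have hv1 : ∀ k ≤ t₁, p k = p₁ k := fun k hk => by
    simp only [hpdef]; rw [if_pos hk]
  have hv2 : ∀ k, t₁ ≤ k → p k = p₂ (k - t₁) := by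
    intro k hk
    rcases Nat.eq_or_lt_of_le hk with h | h
    · simp only [hpdef]
      rw [if_pos (by omega), ← h, Nat.sub_self, h20, ← h1t]
    · simp only [hpdef]; rw [if_neg (by omega)]
  have hNW : NW (ERel E) (t₁ + t₂) p := by
    intro k hk
    rcases Nat.lt_or_ge k t₁ with h | h
    · rw [hv1 k (by omega), hv1 (k+1) (by omega)]
      exact hp₁ k h
    · rw [hv2 k h, hv2 (k+1) (by omega), show k + 1 - t₁ = k - t₁ + 1 by omega]
      exact hp₂ (k - t₁) (by omega)
  have hWt : NWt (Eγ γ) (t₁ + t₂) p = NWt (Eγ γ) t₁ p₁ + NWt (Eγ γ) t₂ p₂ := by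
    unfold NWt
    rw [Finset.sum_range_add]
    congr 1
    · refine Finset.sum_congr rfl fun k hk => ?_
      rw [Finset.mem_range] at hk
      rw [hv1 k (by omega), hv1 (k+1) (by omega)]
    · refine Finset.sum_congr rfl fun k _ => ?_
      rw [hv2 (t₁ + k) (by omega), hv2 (t₁ + k + 1) (by omega),
        show t₁ + k - t₁ = k by omega, show t₁ + k + 1 - t₁ = k + 1 by omega]
  have hlam : pathLambda E γ a c
      ≤ ((NWt (Eγ γ) t₁ p₁ + NWt (Eγ γ) t₂ p₂ : ℝ) : EReal) := by
    have := lam_le_walk (γ := γ) hNW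
    rw [hv1 0 (by omega), h10, hv2 (t₁ + t₂) (by omega),
      show t₁ + t₂ - t₁ = t₂ by omega, h2t, hWt] at this
    exact this
  have hnetop : pathLambda E γ a c ≠ ⊤ :=
    (lt_of_le_of_lt hlam (EReal.coe_lt_top _)).ne
  refine ⟨hnetop, ?_⟩
  have h1 := EReal.toReal_le_toReal hlam (lam_ne_bot hy a c) (EReal.coe_ne_top _)
  rw [EReal.toReal_coe] at h1
  rw [heq1, heq2, EReal.toReal_coe, EReal.toReal_coe]
  exact h1

end Lambda

section Cycles
variable {n : ℕ}

def CycOk (Ok : Bool → Fin n → Fin n → Prop) (t : ℕ) (c : ℕ → Bool × Fin n) : Prop :=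
  ∀ k < t, Ok (c k).1 (c k).2 (c ((k + 1) % t)).2

def CycW (tw : Bool → Fin n → Fin n → ℝ) (t : ℕ) (c : ℕ → Bool × Fin n) : ℝ :=
  ∑ k ∈ range t, tw (c k).1 (c k).2 (c ((k + 1) % t)).2

lemma sum_mod_rot (G : ℕ → ℝ) (t : ℕ) :
    ∀ r, ∑ k ∈ range t, G ((k + r) % t) = ∑ k ∈ range t, G (k % t) := by
  intro r
  induction r with
  | zero => rfl
  | succ r ih =>
    rcases Nat.eq_zero_or_pos t with h0 | h0
    · subst h0; simp
    have e1 : ∑ k ∈ range t, G ((k + (r + 1)) % t)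
        = ∑ k ∈ range t, (fun k' => G ((k' + r) % t)) (k + 1) := by
      refine Finset.sum_congr rfl fun k _ => ?_
      simp only
      rw [show k + (r + 1) = k + 1 + r by omega]
    rw [e1]
    have e2 : ∑ k ∈ range t, (fun k' => G ((k' + r) % t)) (k + 1)
        = ∑ k ∈ range t, G ((k + r) % t) := by
      obtain ⟨t', rfl⟩ : ∃ t', t = t' + 1 := ⟨t - 1, by omega⟩
      rw [Finset.sum_range_succ, Finset.sum_range_succ']
      simp only
      congr 1
      rw [Nat.add_mod_left, Nat.zero_add]
    rw [e2, ih]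

/-- index identity for rotations -/
lemma rot_idx (t r k : ℕ) : ((k + 1) % t + r) % t = ((k + r) % t + 1) % t := by
  rw [Nat.mod_add_mod, Nat.mod_add_mod, show k + 1 + r = k + r + 1 by omega]

lemma cyc_rot {Ok : Bool → Fin n → Fin n → Prop} {tw : Bool → Fin n → Fin n → ℝ}
    {t : ℕ} (ht : 1 ≤ t) (r : ℕ) {c : ℕ → Bool × Fin n} (hc : CycOk Ok t c) :
    CycOk Ok t (fun k => c ((k + r) % t)) ∧
      CycW tw t (fun k => c ((k + r) % t)) = CycW tw t c := by
  constructor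
  · intro k hk
    have hj : (k + r) % t < t := Nat.mod_lt _ (by omega)
    have := hc ((k + r) % t) hj
    show Ok (c ((k + r) % t)).1 (c ((k + r) % t)).2 (c (((k + 1) % t + r) % t)).2
    rw [rot_idx]
    exact this
  · show (∑ k ∈ range t, tw (c ((k+r) % t)).1 (c ((k+r) % t)).2
        (c (((k+1) % t + r) % t)).2) = _
    have e1 : ∀ k, tw (c ((k+r) % t)).1 (c ((k+r) % t)).2 (c (((k+1) % t + r) % t)).2
        = (fun k' => tw (c k').1 (c k').2 (c ((k' + 1) % t)).2) ((k + r) % t) := by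
      intro k
      simp only
      rw [rot_idx, Nat.mod_add_mod]
    rw [Finset.sum_congr rfl (fun k _ => e1 k),
      sum_mod_rot (fun k' => tw (c k').1 (c k').2 (c ((k' + 1) % t)).2) t r]
    refine Finset.sum_congr rfl fun k hk => ?_
    rw [mem_range] at hk
    rw [Nat.mod_eq_of_lt hk]

lemma sum_range_two_mul (F : ℕ → ℝ) :
    ∀ M, ∑ k ∈ range (2 * M), F k = ∑ r ∈ range M, (F (2 * r) + F (2 * r + 1)) := by
  intro M
  induction M with
  | zero => rfl
  | succ M ih =>
    have e1 : ∑ k ∈ range (2 * (M + 1)), F k = ∑ k ∈ range (2 * M + 1 + 1), F k := by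
      rw [show 2 * M + 1 + 1 = 2 * (M + 1) by omega]
    rw [e1, Finset.sum_range_succ, Finset.sum_range_succ, ih, Finset.sum_range_succ]
    ring

/-- the strictly-alternating, vertex-distinct case of the cycle lemma. -/
lemma CLalt {Ok : Bool → Fin n → Fin n → Prop} {tw : Bool → Fin n → Fin n → ℝ}
    (Halt : ∀ (m : ℕ) (i j : Fin (m+1) → Fin n), Function.Injective (Sum.elim i j) →
      (∀ r, Ok true (i r) (j r)) → (∀ r, Ok false (j r) (i (r+1))) →
      0 ≤ ∑ r : Fin (m+1), (tw true (i r) (j r) + tw false (j r) (i (r+1))))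
    {t : ℕ} (ht : 2 ≤ t) {c : ℕ → Bool × Fin n} (hc : CycOk Ok t c)
    (hsame : ∀ k < t, (c k).1 ≠ (c ((k + 1) % t)).1)
    (hdup : ∀ k₁ k₂, k₁ < k₂ → k₂ < t → (c k₁).2 ≠ (c k₂).2)
    (hstart : (c 0).1 = true) :
    0 ≤ CycW tw t c := by
  -- types alternate with parity
  have Ht : ∀ k, k < t → (c k).1 = decide (k % 2 = 0) := by
    intro k
    induction k with
    | zero => intro _; simpa using hstart
    | succ k ihk =>
      intro hk
      have h1 := ihk (by omega)
      have h2 := hsame k (by omega)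
      rw [Nat.mod_eq_of_lt hk] at h2
      have h3 : (c (k+1)).1 = !(c k).1 := by
        cases hc1 : (c (k+1)).1 <;> cases hc2 : (c k).1 <;> simp_all
      rw [h3, h1]
      have hpar : k % 2 = 0 ∨ k % 2 = 1 := by omega
      rcases hpar with h | h
      · have h' : (k+1) % 2 = 1 := by omega
        simp [h, h']
      · have h' : (k+1) % 2 = 0 := by omega
        simp [h, h']
  -- t is even
  have hteven : t % 2 = 0 := by
    have h1 := hsame (t-1) (by omega)
    have h2 := Ht (t-1) (by omega)
    rw [show (t - 1 + 1) % t = 0 by rw [show t - 1 + 1 = t by omega]; exact Nat.mod_self t,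
      hstart] at h1
    by_contra hodd
    have h3 : (t-1) % 2 = 0 := by omega
    rw [h2, h3] at h1
    simp at h1
  obtain ⟨m, hm⟩ : ∃ m, t = 2 * (m + 1) := ⟨t / 2 - 1, by omega⟩
  set i : Fin (m+1) → Fin n := fun r => (c (2 * r.val)).2 with hidef
  set j : Fin (m+1) → Fin n := fun r => (c (2 * r.val + 1)).2 with hjdef
  have hrsucc : ∀ r : Fin (m+1), (2 * r.val + 1 + 1) % t = 2 * ((r + 1 : Fin (m+1)).val) := by
    intro r
    rcases Nat.lt_or_ge (r.val + 1) (m + 1) with h | h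
    · have h1 : ((r + 1 : Fin (m+1)) : ℕ) = r.val + 1 := by
        apply Fin.val_add_one_of_lt
        rw [Fin.lt_iff_val_lt_val, Fin.val_last]
        omega
      rw [h1, Nat.mod_eq_of_lt (by omega)]
      omega
    · have hr : r = Fin.last m := by
        apply Fin.ext
        rw [Fin.val_last]
        have := r.isLt
        omega
      rw [hr, Fin.last_add_one]
      show (2 * (Fin.last m).val + 1 + 1) % t = 2 * ((0 : Fin (m+1)) : ℕ)
      rw [Fin.val_last, Fin.val_zero, show 2 * m + 1 + 1 = t by omega, Nat.mod_self]
  have hb1 : ∀ r : Fin (m+1), 2 * r.val < t := fun r => by have := r.isLt; omega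
  have hb2 : ∀ r : Fin (m+1), 2 * r.val + 1 < t := fun r => by have := r.isLt; omega
  have htypeT : ∀ r : Fin (m+1), (c (2 * r.val)).1 = true := by
    intro r
    rw [Ht (2 * r.val) (hb1 r), show (2 * r.val) % 2 = 0 by omega]
    rfl
  have htypeF : ∀ r : Fin (m+1), (c (2 * r.val + 1)).1 = false := by
    intro r
    rw [Ht (2 * r.val + 1) (hb2 r), show (2 * r.val + 1) % 2 = 1 by omega]
    rfl
  have hOkT : ∀ r : Fin (m+1), Ok true (i r) (j r) := by
    intro r
    have h := hc (2 * r.val) (hb1 r)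
    rw [Nat.mod_eq_of_lt (hb2 r), htypeT r] at h
    simp only [hidef, hjdef]
    exact h
  have hOkF : ∀ r : Fin (m+1), Ok false (j r) (i (r + 1)) := by
    intro r
    have h := hc (2 * r.val + 1) (hb2 r)
    rw [htypeF r, hrsucc r] at h
    simp only [hidef, hjdef]
    exact h
  have hNe : ∀ k₁ k₂, k₁ < t → k₂ < t → k₁ ≠ k₂ → (c k₁).2 ≠ (c k₂).2 := by
    intro k₁ k₂ h1 h2 hne
    rcases Nat.lt_or_ge k₁ k₂ with h | h
    · exact hdup k₁ k₂ h h2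
    · exact (hdup k₂ k₁ (by omega) h1).symm
  have hinj : Function.Injective (Sum.elim i j) := by
    intro a b heq
    have hvala : ∀ ra : Fin (m+1), Sum.elim i j (Sum.inl ra) = (c (2 * ra.val)).2 := by
      intro ra; simp [hidef]
    have hvalb : ∀ ra : Fin (m+1), Sum.elim i j (Sum.inr ra) = (c (2 * ra.val + 1)).2 := by
      intro ra; simp [hjdef]
    rcases a with ra | ra <;> rcases b with rb | rb
    · by_cases hab : ra = rb
      · rw [hab]
      · exfalso
        refine hNe (2 * ra.val) (2 * rb.val) (hb1 ra) (hb1 rb) ?_ ?_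
        · have : ra.val ≠ rb.val := fun h => hab (Fin.ext h)
          omega
        · rw [← hvala ra, ← hvala rb, heq]
    · exfalso
      refine hNe (2 * ra.val) (2 * rb.val + 1) (hb1 ra) (hb2 rb) (by omega) ?_
      rw [← hvala ra, ← hvalb rb, heq]
    · exfalso
      refine hNe (2 * ra.val + 1) (2 * rb.val) (hb2 ra) (hb1 rb) (by omega) ?_
      rw [← hvalb ra, ← hvala rb, heq]
    · by_cases hab : ra = rb
      · rw [hab]
      · exfalso
        refine hNe (2 * ra.val + 1) (2 * rb.val + 1) (hb2 ra) (hb2 rb) ?_ ?_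
        · have : ra.val ≠ rb.val := fun h => hab (Fin.ext h)
          omega
        · rw [← hvalb ra, ← hvalb rb, heq]
  have hfinal := Halt m i j hinj hOkT hOkF
  -- identify the two sums
  have e0 : CycW tw t c
      = ∑ k ∈ range (2 * (m+1)), (fun k' => tw (c k').1 (c k').2 (c ((k' + 1) % t)).2) k := by
    rw [← hm]; rfl
  rw [e0, sum_range_two_mul,
    ← Fin.sum_univ_eq_sum_range
      (fun r => (fun k' => tw (c k').1 (c k').2 (c ((k' + 1) % t)).2) (2 * r)
        + (fun k' => tw (c k').1 (c k').2 (c ((k' + 1) % t)).2) (2 * r + 1)) (m+1)]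
  have eterm : ∀ r : Fin (m+1),
      (fun k' => tw (c k').1 (c k').2 (c ((k' + 1) % t)).2) (2 * r.val)
        + (fun k' => tw (c k').1 (c k').2 (c ((k' + 1) % t)).2) (2 * r.val + 1)
      = tw true (i r) (j r) + tw false (j r) (i (r+1)) := by
    intro r
    simp only
    rw [Nat.mod_eq_of_lt (hb2 r), htypeT r, htypeF r, hrsucc r]
  rw [Finset.sum_congr rfl (fun r _ => eterm r)]
  exact hfinal

/-- the cycle lemma: every typed cycle has nonnegative weight. -/
lemma CL {Ok : Bool → Fin n → Fin n → Prop} {tw : Bool → Fin n → Fin n → ℝ}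
    (Hloop : ∀ k a, Ok k a a → 0 ≤ tw k a a)
    (Htri : ∀ k a b c', Ok k a b → Ok k b c' → Ok k a c' ∧ tw k a c' ≤ tw k a b + tw k b c')
    (Halt : ∀ (m : ℕ) (i j : Fin (m+1) → Fin n), Function.Injective (Sum.elim i j) →
      (∀ r, Ok true (i r) (j r)) → (∀ r, Ok false (j r) (i (r+1))) →
      0 ≤ ∑ r : Fin (m+1), (tw true (i r) (j r) + tw false (j r) (i (r+1)))) :
    ∀ t c, CycOk Ok t c → 0 ≤ CycW tw t c := by
  intro t
  induction t using Nat.strong_induction_on with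
  | _ t ih =>
  intro c hc
  rcases Nat.lt_or_ge t 2 with ht2 | ht2
  · interval_cases t
    · simp [CycW]
    · have h := hc 0 (by omega)
      rw [Nat.mod_self] at h
      have : CycW tw 1 c = tw (c 0).1 (c 0).2 (c (1 % 1)).2 := Finset.sum_range_one _
      rw [this, Nat.mod_self]
      exact Hloop _ _ h
  by_cases hsame : ∃ k, k < t ∧ (c k).1 = (c ((k + 1) % t)).1
  · obtain ⟨k, hk, hks⟩ := hsame
    set r := (k + 2) % t with hrdef
    set c' := fun k' => c ((k' + r) % t) with hc'def
    obtain ⟨hOk', hW'⟩ := cyc_rot (Ok := Ok) (tw := tw) (by omega) r hc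
    rw [← hc'def] at hOk' hW'
    have idx1 : (t - 2 + r) % t = k := by
      rw [hrdef, Nat.add_mod_mod, show t - 2 + (k + 2) = k + t by omega,
        Nat.add_mod_right, Nat.mod_eq_of_lt hk]
    have idx2 : (t - 1 + r) % t = (k + 1) % t := by
      rw [hrdef, Nat.add_mod_mod, show t - 1 + (k + 2) = (k + 1) + t by omega,
        Nat.add_mod_right]
    have hsame' : (c' (t - 2)).1 = (c' (t - 1)).1 := by
      simp only [hc'def]
      rw [idx1, idx2]
      exact hks
    have m1 : (t - 2 + 1) % t = t - 1 := by
      rw [show t - 2 + 1 = t - 1 by omega]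
      exact Nat.mod_eq_of_lt (by omega)
    have m2 : (t - 1 + 1) % t = 0 := by
      rw [show t - 1 + 1 = t by omega]
      exact Nat.mod_self t
    have m3 : (t - 2 + 1) % (t - 1) = 0 := by
      rw [show t - 2 + 1 = t - 1 by omega]
      exact Nat.mod_self _
    have eA := hOk' (t - 2) (by omega)
    rw [m1] at eA
    have eB := hOk' (t - 1) (by omega)
    rw [m2] at eB
    rw [← hsame'] at eB
    obtain ⟨hOkM, hWM⟩ := Htri _ _ _ _ eA eB
    -- the merged cycle of length t - 1
    have hOk'' : CycOk Ok (t - 1) c' := by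
      intro k' hk'
      rcases Nat.lt_or_ge k' (t - 2) with h | h
      · rw [Nat.mod_eq_of_lt (by omega : k' + 1 < t - 1)]
        have := hOk' k' (by omega)
        rw [Nat.mod_eq_of_lt (by omega : k' + 1 < t)] at this
        exact this
      · have hk'' : k' = t - 2 := by omega
        rw [hk'', m3]
        exact hOkM
    have hWle : CycW tw (t - 1) c' ≤ CycW tw t c' := by
      have eL : CycW tw (t - 1) c'
          = ∑ k' ∈ range (t - 2), (fun k'' => tw (c' k'').1 (c' k'').2
              (c' ((k'' + 1) % (t-1))).2) k'
            + tw (c' (t-2)).1 (c' (t-2)).2 (c' ((t - 2 + 1) % (t-1))).2 := by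
        have : CycW tw (t - 1) c' = ∑ k' ∈ range (t - 2 + 1),
            (fun k'' => tw (c' k'').1 (c' k'').2 (c' ((k'' + 1) % (t-1))).2) k' := by
          rw [show t - 2 + 1 = t - 1 by omega]; rfl
        rw [this, Finset.sum_range_succ]
      have eR : CycW tw t c'
          = (∑ k' ∈ range (t - 2), (fun k'' => tw (c' k'').1 (c' k'').2
              (c' ((k'' + 1) % t)).2) k'
            + tw (c' (t-2)).1 (c' (t-2)).2 (c' ((t - 2 + 1) % t)).2)
            + tw (c' (t-1)).1 (c' (t-1)).2 (c' ((t - 1 + 1) % t)).2 := by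
        have : CycW tw t c' = ∑ k' ∈ range (t - 2 + 1 + 1),
            (fun k'' => tw (c' k'').1 (c' k'').2 (c' ((k'' + 1) % t)).2) k' := by
          rw [show t - 2 + 1 + 1 = t by omega]; rfl
        rw [this, Finset.sum_range_succ, Finset.sum_range_succ,
          show t - 2 + 1 = t - 1 by omega]
      have esum : ∑ k' ∈ range (t - 2), (fun k'' => tw (c' k'').1 (c' k'').2
            (c' ((k'' + 1) % (t-1))).2) k'
          = ∑ k' ∈ range (t - 2), (fun k'' => tw (c' k'').1 (c' k'').2
            (c' ((k'' + 1) % t)).2) k' := by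
        refine Finset.sum_congr rfl fun k' hk' => ?_
        rw [mem_range] at hk'
        simp only
        rw [Nat.mod_eq_of_lt (by omega : k' + 1 < t - 1),
          Nat.mod_eq_of_lt (by omega : k' + 1 < t)]
      rw [eL, eR, esum, m3, m1, m2]
      rw [← hsame']
      linarith [hWM]
    have h0 := ih (t - 1) (by omega) c' hOk''
    rw [← hW']
    linarith
  · push_neg at hsame
    by_cases hdup : ∃ k₁, ∃ k₂, k₁ < k₂ ∧ k₂ < t ∧ (c k₁).2 = (c k₂).2
    · obtain ⟨k₁, k₂, h12, h2t, hvv⟩ := hdup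
      set c' := fun k' => c ((k' + k₁) % t) with hc'def
      obtain ⟨hOk', hW'⟩ := cyc_rot (Ok := Ok) (tw := tw) (by omega) k₁ hc
      rw [← hc'def] at hOk' hW'
      set d := k₂ - k₁ with hddef
      have hd1 : 1 ≤ d := by omega
      have hdt : d < t := by omega
      have m4 : (d + k₁) % t = k₂ := by
        rw [show d + k₁ = k₂ by omega]
        exact Nat.mod_eq_of_lt h2t
      have hvert : (c' 0).2 = (c' d).2 := by
        simp only [hc'def]
        rw [Nat.zero_add, Nat.mod_eq_of_lt (by omega : k₁ < t), m4]
        exact hvv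
      -- first subcycle
      have hOkg : CycOk Ok d c' := by
        intro k hk
        have base := hOk' k (by omega)
        rcases Nat.lt_or_ge (k + 1) d with h | h
        · rw [Nat.mod_eq_of_lt h]
          rw [Nat.mod_eq_of_lt (by omega : k + 1 < t)] at base
          exact base
        · have hk1 : k + 1 = d := by omega
          have m5 : (k + 1) % t = d := by
            rw [hk1]
            exact Nat.mod_eq_of_lt hdt
          rw [hk1, Nat.mod_self]
          rw [m5] at base
          rw [← hvert] at base
          exact base
      -- second subcycle
      set c'' := fun k' => c' (d + k') with hc''def
      have hOkh : CycOk Ok (t - d) c'' := by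
        intro k hk
        have base := hOk' (d + k) (by omega)
        simp only [hc''def]
        rcases Nat.lt_or_ge (k + 1) (t - d) with h | h
        · rw [Nat.mod_eq_of_lt h]
          rw [Nat.mod_eq_of_lt (by omega : d + k + 1 < t)] at base
          rw [show d + (k + 1) = d + k + 1 by omega]
          exact base
        · have hk1 : k + 1 = t - d := by omega
          have m6 : (d + k + 1) % t = 0 := by
            rw [show d + k + 1 = t by omega]
            exact Nat.mod_self t
          rw [hk1, Nat.mod_self, Nat.add_zero]
          rw [m6] at base
          rw [hvert] at base
          exact base
      have hWeq : CycW tw t c' = CycW tw d c' + CycW tw (t - d) c'' := by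
        have eT : CycW tw t c' = ∑ k ∈ range (d + (t - d)),
            (fun k' => tw (c' k').1 (c' k').2 (c' ((k' + 1) % t)).2) k := by
          rw [show d + (t - d) = t by omega]; rfl
        rw [eT, Finset.sum_range_add]
        congr 1
        · refine Finset.sum_congr rfl fun k hk => ?_
          rw [mem_range] at hk
          rcases Nat.lt_or_ge (k + 1) d with h | h
          · rw [Nat.mod_eq_of_lt h, Nat.mod_eq_of_lt (by omega : k + 1 < t)]
          · have hk1 : k + 1 = d := by omega
            rw [hk1, Nat.mod_self, Nat.mod_eq_of_lt hdt, ← hvert]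

        · refine Finset.sum_congr rfl fun k hk => ?_
          rw [mem_range] at hk
          simp only [hc''def]
          rcases Nat.lt_or_ge (k + 1) (t - d) with h | h
          · rw [Nat.mod_eq_of_lt h, Nat.mod_eq_of_lt (by omega : d + k + 1 < t),
              show d + (k + 1) = d + k + 1 by omega]
          · have hk1 : k + 1 = t - d := by omega
            have m6 : (d + k + 1) % t = 0 := by
              rw [show d + k + 1 = t by omega]
              exact Nat.mod_self t
            have m8 : d + (k + 1) % (t - d) = d := by
              rw [hk1, Nat.mod_self, Nat.add_zero]
            rw [m6, m8, hvert]
      have hg := ih d (by omega) c' hOkg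
      have hh := ih (t - d) (by omega) c'' hOkh
      rw [← hW', hWeq]
      linarith
    · push_neg at hdup
      by_cases hstart : (c 0).1 = true
      · exact CLalt Halt ht2 hc hsame hdup hstart
      · set c' := fun k' => c ((k' + 1) % t) with hc'def
        obtain ⟨hOk', hW'⟩ := cyc_rot (Ok := Ok) (tw := tw) (by omega) 1 hc
        rw [← hc'def] at hOk' hW'
        have hsame' : ∀ k < t, (c' k).1 ≠ (c' ((k + 1) % t)).1 := by
          intro k hk
          simp only [hc'def]
          exact hsame ((k + 1) % t) (Nat.mod_lt _ (by omega))
        have hdup' : ∀ k₁ k₂, k₁ < k₂ → k₂ < t → (c' k₁).2 ≠ (c' k₂).2 := by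
          intro k₁ k₂ h12 h2t
          simp only [hc'def]
          have h1t : k₁ + 1 < t := by omega
          rw [Nat.mod_eq_of_lt h1t]
          rcases Nat.lt_or_ge (k₂ + 1) t with h | h
          · rw [Nat.mod_eq_of_lt h]
            exact hdup (k₁ + 1) (k₂ + 1) (by omega) h
          · have m7 : (k₂ + 1) % t = 0 := by
              rw [show k₂ + 1 = t by omega]
              exact Nat.mod_self t
            rw [m7]
            exact (hdup 0 (k₁ + 1) (by omega) h1t).symm
        have hstart' : (c' 0).1 = true := by
          simp only [hc'def]
          rw [Nat.zero_add, Nat.mod_eq_of_lt (by omega : 1 < t)]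
          have hs0 := hsame 0 (by omega)
          rw [Nat.mod_eq_of_lt (by omega : 0 + 1 < t), Nat.zero_add] at hs0
          cases hb : (c 1).1
          · exfalso
            cases hb0 : (c 0).1
            · exact hs0 (by rw [hb0, hb])
            · exact hstart hb0
          · rfl
        rw [← hW']
        exact CLalt Halt ht2 hOk' hsame' hdup' hstart'

end Cycles

section Feas
variable {n : ℕ}

/-- feasibility of difference constraints when all cycles are nonnegative. -/
lemma LemA {R : Fin n → Fin n → Prop} {f : Fin n → Fin n → ℝ}
    (hcyc : ∀ t p, NW R t p → p 0 = p t → 0 ≤ NWt f t p) :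
    ∃ y : Fin n → ℝ, ∀ a b, R a b → y b - y a ≤ f a b := by
  classical
  set natify : (Σ tq : Fin (n+1), (Fin (tq.val + 1) → Fin n)) → (ℕ → Fin n) :=
    fun q => fun k => q.2 ⟨min k q.1.val, by omega⟩ with hnat
  set B : Fin n → Finset ℝ := fun v =>
    (Finset.univ.filter (fun q : Σ tq : Fin (n+1), (Fin (tq.val+1) → Fin n) =>
      NW R q.1.val (natify q) ∧ natify q q.1.val = v)).image
      (fun q => NWt f q.1.val (natify q)) with hBdef
  have key : ∀ (t₂ : ℕ) (p₂ : ℕ → Fin n), NW R t₂ p₂ →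
      ∃ u ∈ B (p₂ t₂), u ≤ NWt f t₂ p₂ := by
    intro t₂ p₂ hp₂
    obtain ⟨t₃, p₃, hle, hp₃, h0', ht', hw⟩ := NW_removal hcyc t₂ p₂ hp₂
    set q : Σ tq : Fin (n+1), (Fin (tq.val + 1) → Fin n) :=
      ⟨⟨t₃, by omega⟩, fun s => p₃ s.val⟩ with hq
    have hagree : ∀ k ≤ t₃, p₃ k = natify q k := by
      intro k hk
      simp only [hnat, hq]
      congr 1
      simp; omega
    refine ⟨NWt f q.1.val (natify q), ?_, ?_⟩
    · simp only [hBdef]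
      refine Finset.mem_image.mpr ⟨q, Finset.mem_filter.mpr ⟨Finset.mem_univ _, ?_, ?_⟩, rfl⟩
      · exact NW_congr hagree hp₃
      · show natify q ↑q.fst = p₂ t₂
        have hh := hagree t₃ (by omega)
        rw [ht'] at hh
        exact hh.symm
    · have heq : NWt f q.1.val (natify q) = NWt f t₃ p₃ := (NWt_congr hagree).symm
      rw [heq]
      exact hw
  have hBne : ∀ v, (B v).Nonempty := by
    intro v
    obtain ⟨u, hu, -⟩ := key 0 (fun _ => v) (fun k hk => absurd hk (by omega))
    exact ⟨u, hu⟩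
  set y : Fin n → ℝ := fun v => (B v).min' (hBne v) with hy
  refine ⟨y, ?_⟩
  intro a b hab
  -- the optimal walk to `a`
  have hmem := (B a).min'_mem (hBne a)
  simp only [hBdef] at hmem
  obtain ⟨q, hq, hqeq⟩ := Finset.mem_image.mp hmem
  obtain ⟨-, hq1, hq2⟩ := Finset.mem_filter.mp hq
  set t := q.1.val with htdef
  set p := natify q with hpdef
  -- extend by the edge (a, b)
  set P : ℕ → Fin n := fun k => if k ≤ t then p k else b with hP
  have hPt : ∀ k ≤ t, P k = p k := fun k hk => by
    simp only [hP]; rw [if_pos hk]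
  have hPtb : P (t + 1) = b := by
    simp only [hP]; rw [if_neg (by omega)]
  have hPNW : NW R (t + 1) P := by
    intro k hk
    rcases Nat.lt_or_ge k t with h | h
    · rw [hPt k (by omega), hPt (k+1) (by omega)]
      exact hq1 k h
    · have hkt : k = t := by omega
      rw [hkt, hPt t (by omega), hPtb]
      rw [hq2]
      exact hab
  have hPW : NWt f (t + 1) P = NWt f t p + f a b := by
    unfold NWt
    rw [Finset.sum_range_succ]
    congr 1
    · refine Finset.sum_congr rfl fun k hk => ?_
      rw [mem_range] at hk
      rw [hPt k (by omega), hPt (k+1) (by omega)]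
    · rw [hPt t (by omega), hPtb, hq2]
  obtain ⟨u, huB, hule⟩ := key (t + 1) P hPNW
  rw [hPtb] at huB
  have h1 : y b ≤ u := (B b).min'_le u huB
  have h2 : y a = NWt f t p := hqeq.symm
  rw [hPW, ← h2] at hule
  have := le_trans h1 hule
  linarith

end Feas

section Main
variable {n : ℕ}

lemma coe_fsum {α : Type*} (s : Finset α) (g : α → ℝ) :
    ((∑ r ∈ s, g r : ℝ) : EReal) = ∑ r ∈ s, ((g r : ℝ) : EReal) :=
  map_sum (⟨⟨(fun r : ℝ => (r : EReal)), EReal.coe_zero⟩,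
    fun a b => EReal.coe_add a b⟩ : ℝ →+ EReal) g s

lemma sum_shift {m : ℕ} (g : Fin (m+1) → ℝ) :
    ∑ r : Fin (m+1), g (r + 1) = ∑ r : Fin (m+1), g r :=
  Fintype.sum_equiv (Equiv.addRight 1) _ _ (fun _ => rfl)

lemma lam_le_edge {E : Finset (Fin n × Fin n)} {γ : Fin n × Fin n → ℝ} :
    ∀ e ∈ E, pathLambda E γ e.1 e.2 ≤ ((γ e : ℝ) : EReal) := by
  intro e he
  classical
  set p : ℕ → Fin n := fun k => if k = 0 then e.1 else e.2 with hpd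
  have h0 : p 0 = e.1 := by simp [hpd]
  have h1 : p 1 = e.2 := by simp [hpd]
  have hNW : NW (ERel E) 1 p := by
    intro k hk
    have hk0 : k = 0 := by omega
    subst hk0
    show (p 0, p (0+1)) ∈ E
    rw [show (0:ℕ) + 1 = 1 from rfl, h0, h1, Prod.mk.eta]
    exact he
  have hle := lam_le_walk (γ := γ) hNW
  rw [h0, h1] at hle
  have hW : NWt (Eγ γ) 1 p = γ e := by
    unfold NWt
    rw [Finset.sum_range_one]
    show γ (p 0, p 1) = γ e
    rw [h0, h1, Prod.mk.eta]
  rwa [hW] at hle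

/-- the hard (reverse) inclusion, packaged. -/
lemma main_rev (E₁ E₂ : Finset (Fin n × Fin n)) (γ₁ γ₂ : Fin n × Fin n → ℝ)
    (p₁ p₂ : Fin n → ℝ)
    (hp₁ : ∀ e ∈ E₁, p₁ e.2 - p₁ e.1 ≤ γ₁ e)
    (hp₂ : ∀ e ∈ E₂, p₂ e.2 - p₂ e.1 ≤ γ₂ e)
    (x : Fin n → ℝ)
    (hx : ∀ m : ℕ, ∀ i j : Fin (m + 1) → Fin n,
      Function.Injective (Sum.elim i j) →
      (((∑ r : Fin (m + 1), (x (j r) - x (i r))) : ℝ) : EReal) ≤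
        ∑ r : Fin (m + 1),
          (pathLambda E₁ γ₁ (i r) (j r) + pathLambda E₂ γ₂ (i (r + 1)) (j r))) :
    ∃ y : Fin n → ℝ, (∀ e ∈ E₁, y e.2 - y e.1 ≤ γ₁ e) ∧
      (∀ e ∈ E₂, (x e.2 - y e.2) - (x e.1 - y e.1) ≤ γ₂ e) := by
  classical
  set Λ₁ := pathLambda E₁ γ₁ with hΛ₁
  set Λ₂ := pathLambda E₂ γ₂ with hΛ₂
  set Ok : Bool → Fin n → Fin n → Prop :=
    fun k a b => cond k (Λ₁ a b ≠ ⊤) (Λ₂ b a ≠ ⊤) with hOk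
  set tw : Bool → Fin n → Fin n → ℝ :=
    fun k a b => cond k (Λ₁ a b).toReal ((Λ₂ b a).toReal - x a + x b) with htw
  set Rel : Fin n → Fin n → Prop := fun a b => Λ₁ a b ≠ ⊤ ∨ Λ₂ b a ≠ ⊤ with hRel
  set w : Fin n → Fin n → ℝ := fun a b =>
    if Λ₁ a b ≠ ⊤ ∧ Λ₂ b a ≠ ⊤ then
      min (Λ₁ a b).toReal ((Λ₂ b a).toReal - x a + x b)
    else if Λ₁ a b ≠ ⊤ then (Λ₁ a b).toReal
    else (Λ₂ b a).toReal - x a + x b with hw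
  -- selection of a type attaining the min
  have hsel : ∀ a b, Rel a b → ∃ k, Ok k a b ∧ tw k a b ≤ w a b := by
    intro a b hab
    by_cases h12 : Λ₁ a b ≠ ⊤ ∧ Λ₂ b a ≠ ⊤
    · rcases le_total ((Λ₁ a b).toReal) ((Λ₂ b a).toReal - x a + x b) with h | h
      · refine ⟨true, h12.1, ?_⟩
        show (Λ₁ a b).toReal ≤ w a b
        simp only [hw]
        rw [if_pos h12]
        exact le_of_eq (min_eq_left h).symm
      · refine ⟨false, h12.2, ?_⟩
        show (Λ₂ b a).toReal - x a + x b ≤ w a b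
        simp only [hw]
        rw [if_pos h12]
        exact le_of_eq (min_eq_right h).symm
    · rcases hab with h1 | h2
      · refine ⟨true, h1, ?_⟩
        show (Λ₁ a b).toReal ≤ w a b
        simp only [hw]
        rw [if_neg h12, if_pos h1]
      · by_cases h1 : Λ₁ a b ≠ ⊤
        · exact absurd ⟨h1, h2⟩ h12
        · refine ⟨false, h2, ?_⟩
          show (Λ₂ b a).toReal - x a + x b ≤ w a b
          simp only [hw]
          rw [if_neg h12, if_neg h1]
  -- cycle-lemma hypotheses
  have hHloop : ∀ k a, Ok k a a → 0 ≤ tw k a a := by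
    intro k a hk
    cases k
    · show 0 ≤ (Λ₂ a a).toReal - x a + x a
      have hnn : (0 : EReal) ≤ Λ₂ a a := by rw [hΛ₂]; exact lam_self_nonneg hp₂ a
      have h := EReal.toReal_le_toReal hnn (by simp) (hk : Λ₂ a a ≠ ⊤)
      rw [EReal.toReal_zero] at h
      linarith
    · show 0 ≤ (Λ₁ a a).toReal
      have hnn : (0 : EReal) ≤ Λ₁ a a := by rw [hΛ₁]; exact lam_self_nonneg hp₁ a
      have h := EReal.toReal_le_toReal hnn (by simp) (hk : Λ₁ a a ≠ ⊤)
      rw [EReal.toReal_zero] at h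
      exact h
  have hHtri : ∀ k a b c', Ok k a b → Ok k b c' →
      Ok k a c' ∧ tw k a c' ≤ tw k a b + tw k b c' := by
    intro k a b c' h1 h2
    cases k
    · have h1' : Λ₂ b a ≠ ⊤ := h1
      have h2' : Λ₂ c' b ≠ ⊤ := h2
      rw [hΛ₂] at h1' h2'
      obtain ⟨hne, hle⟩ := lam_triangle hp₂ c' b a h2' h1'
      rw [← hΛ₂] at hne hle
      refine ⟨hne, ?_⟩
      show (Λ₂ c' a).toReal - x a + x c'
        ≤ ((Λ₂ b a).toReal - x a + x b) + ((Λ₂ c' b).toReal - x b + x c')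
      linarith
    · have h1' : Λ₁ a b ≠ ⊤ := h1
      have h2' : Λ₁ b c' ≠ ⊤ := h2
      rw [hΛ₁] at h1' h2'
      obtain ⟨hne, hle⟩ := lam_triangle hp₁ a b c' h1' h2'
      rw [← hΛ₁] at hne hle
      exact ⟨hne, hle⟩
  have hHalt : ∀ (m : ℕ) (i j : Fin (m+1) → Fin n), Function.Injective (Sum.elim i j) →
      (∀ r, Ok true (i r) (j r)) → (∀ r, Ok false (j r) (i (r+1))) →
      0 ≤ ∑ r : Fin (m+1), (tw true (i r) (j r) + tw false (j r) (i (r+1))) := by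
    intro m i j hinj hT hF
    have hx' := hx m i j hinj
    have hT' : ∀ r, Λ₁ (i r) (j r) ≠ ⊤ := fun r => hT r
    have hF' : ∀ r, Λ₂ (i (r+1)) (j r) ≠ ⊤ := fun r => hF r
    have hTb : ∀ r, Λ₁ (i r) (j r) ≠ ⊥ := fun r => by
      rw [hΛ₁]; exact lam_ne_bot hp₁ _ _
    have hFb : ∀ r, Λ₂ (i (r+1)) (j r) ≠ ⊥ := fun r => by
      rw [hΛ₂]; exact lam_ne_bot hp₂ _ _
    have hRHS : ∑ r : Fin (m+1), (pathLambda E₁ γ₁ (i r) (j r)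
          + pathLambda E₂ γ₂ (i (r + 1)) (j r))
        = ((∑ r : Fin (m+1), ((Λ₁ (i r) (j r)).toReal
            + (Λ₂ (i (r+1)) (j r)).toReal) : ℝ) : EReal) := by
      rw [coe_fsum]
      refine Finset.sum_congr rfl fun r _ => ?_
      rw [EReal.coe_add, EReal.coe_toReal (hT' r) (hTb r),
        EReal.coe_toReal (hF' r) (hFb r)]
    rw [hRHS, EReal.coe_le_coe_iff] at hx'
    have hgoal : ∑ r : Fin (m+1), (tw true (i r) (j r) + tw false (j r) (i (r+1)))
        = ∑ r : Fin (m+1), ((Λ₁ (i r) (j r)).toReal + (Λ₂ (i (r+1)) (j r)).toReal)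
          + (∑ r : Fin (m+1), x (i (r+1)) - ∑ r : Fin (m+1), x (j r)) := by
      have e1 : ∀ r : Fin (m+1), tw true (i r) (j r) + tw false (j r) (i (r+1))
          = ((Λ₁ (i r) (j r)).toReal + (Λ₂ (i (r+1)) (j r)).toReal)
            + (x (i (r+1)) - x (j r)) := by
        intro r
        show (Λ₁ (i r) (j r)).toReal
            + ((Λ₂ (i (r+1)) (j r)).toReal - x (j r) + x (i (r+1))) = _
        ring
      rw [Finset.sum_congr rfl (fun r _ => e1 r), Finset.sum_add_distrib,
        Finset.sum_sub_distrib]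
    rw [hgoal, sum_shift (fun v => x (i v))]
    rw [Finset.sum_sub_distrib] at hx'
    linarith
  -- no negative cycles for (Rel, w)
  have hcycH : ∀ t p, NW Rel t p → p 0 = p t → 0 ≤ NWt w t p := by
    intro t p hp hclosed
    have hch : ∀ k, ∃ bk, k < t →
        Ok bk (p k) (p (k+1)) ∧ tw bk (p k) (p (k+1)) ≤ w (p k) (p (k+1)) := by
      intro k
      by_cases hk : k < t
      · obtain ⟨bk, hb1, hb2⟩ := hsel (p k) (p (k+1)) (hp k hk)
        exact ⟨bk, fun _ => ⟨hb1, hb2⟩⟩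
      · exact ⟨true, fun h => absurd h hk⟩
    choose K hK using hch
    set c : ℕ → Bool × Fin n := fun k => (K k, p k) with hcdef
    have hcOk : CycOk Ok t c := by
      intro k hk
      show Ok (K k) (p k) (p ((k+1) % t))
      rcases Nat.lt_or_ge (k+1) t with h | h
      · rw [Nat.mod_eq_of_lt h]
        exact (hK k hk).1
      · have hm : (k+1) % t = 0 := by
          rw [show k + 1 = t by omega]
          exact Nat.mod_self t
        rw [hm]
        have h1 := (hK k hk).1
        rw [show k + 1 = t by omega, ← hclosed] at h1
        exact h1
    have h0 := CL hHloop hHtri hHalt t c hcOk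
    have hle : CycW tw t c ≤ NWt w t p := by
      unfold CycW NWt
      refine Finset.sum_le_sum fun k hk => ?_
      rw [mem_range] at hk
      show tw (K k) (p k) (p ((k+1) % t)) ≤ w (p k) (p (k+1))
      rcases Nat.lt_or_ge (k+1) t with h | h
      · rw [Nat.mod_eq_of_lt h]
        exact (hK k hk).2
      · have hm : (k+1) % t = 0 := by
          rw [show k + 1 = t by omega]
          exact Nat.mod_self t
        rw [hm, hclosed, show t = k + 1 by omega]
        exact (hK k hk).2
    linarith
  obtain ⟨y, hyfeas⟩ := LemA hcycH
  refine ⟨y, ?_, ?_⟩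
  · intro e he
    have hle1 : Λ₁ e.1 e.2 ≤ ((γ₁ e : ℝ) : EReal) := by
      rw [hΛ₁]; exact lam_le_edge e he
    have hne : Λ₁ e.1 e.2 ≠ ⊤ := (lt_of_le_of_lt hle1 (EReal.coe_lt_top _)).ne
    have hfeas := hyfeas e.1 e.2 (Or.inl hne)
    have hwle : w e.1 e.2 ≤ (Λ₁ e.1 e.2).toReal := by
      simp only [hw]
      by_cases h12 : Λ₁ e.1 e.2 ≠ ⊤ ∧ Λ₂ e.2 e.1 ≠ ⊤
      · rw [if_pos h12]
        exact min_le_left _ _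
      · rw [if_neg h12, if_pos hne]
    have htr : (Λ₁ e.1 e.2).toReal ≤ γ₁ e := by
      have h := EReal.toReal_le_toReal hle1 (by rw [hΛ₁]; exact lam_ne_bot hp₁ _ _)
        (EReal.coe_ne_top _)
      rwa [EReal.toReal_coe] at h
    linarith
  · intro e he
    have hle1 : Λ₂ e.1 e.2 ≤ ((γ₂ e : ℝ) : EReal) := by
      rw [hΛ₂]; exact lam_le_edge e he
    have hne : Λ₂ e.1 e.2 ≠ ⊤ := (lt_of_le_of_lt hle1 (EReal.coe_lt_top _)).ne
    have hfeas := hyfeas e.2 e.1 (Or.inr hne)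
    have hwle : w e.2 e.1 ≤ (Λ₂ e.1 e.2).toReal - x e.2 + x e.1 := by
      simp only [hw]
      by_cases h12 : Λ₁ e.2 e.1 ≠ ⊤ ∧ Λ₂ e.1 e.2 ≠ ⊤
      · rw [if_pos h12]
        exact min_le_right _ _
      · have h1 : ¬ (Λ₁ e.2 e.1 ≠ ⊤) := by
          by_contra hcon
          exact h12 ⟨hcon, hne⟩
        rw [if_neg h12, if_neg h1]
    have htr : (Λ₂ e.1 e.2).toReal ≤ γ₂ e := by
      have h := EReal.toReal_le_toReal hle1 (by rw [hΛ₂]; exact lam_ne_bot hp₂ _ _)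
        (EReal.coe_ne_top _)
      rwa [EReal.toReal_coe] at h
    linarith

end Main


end AuxCycleDescription

/-- Cycle description of the L₂-convex polyhedron `P = P₁ + P₂`: `x ∈ P` iff for
every `m ≥ 1` and all `2m` distinct indices `i₁,…,i_m, j₁,…,j_m` (with
`i_{m+1} = i₁` cyclically),
`Σ_r (x_{j_r} - x_{i_r}) ≤ Σ_r (λ(i_r,j_r;G₁) + λ(i_{r+1},j_r;G₂))`. -/
theorem L2_convex_polyhedron_cycle_description {n : ℕ}
    (E₁ E₂ : Finset (Fin n × Fin n))
    (hE₁ : ∀ e ∈ E₁, e.1 ≠ e.2) (hE₂ : ∀ e ∈ E₂, e.1 ≠ e.2)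
    (γ₁ γ₂ : Fin n × Fin n → ℝ)
    (P₁ P₂ : Set (Fin n → ℝ))
    (hP₁def : P₁ = {y : Fin n → ℝ | ∀ e ∈ E₁, y e.2 - y e.1 ≤ γ₁ e})
    (hP₂def : P₂ = {y : Fin n → ℝ | ∀ e ∈ E₂, y e.2 - y e.1 ≤ γ₂ e})
    (hL₁ : IsLConvexPoly P₁) (hL₂ : IsLConvexPoly P₂) :
    P₁ + P₂ = {x : Fin n → ℝ |
      ∀ m : ℕ, ∀ i j : Fin (m + 1) → Fin n,
        Function.Injective (Sum.elim i j) →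
        (((∑ r : Fin (m + 1), (x (j r) - x (i r))) : ℝ) : EReal) ≤
          ∑ r : Fin (m + 1),
            (pathLambda E₁ γ₁ (i r) (j r) + pathLambda E₂ γ₂ (i (r + 1)) (j r))} := by
  obtain ⟨-, hP₁ne, -, -⟩ := hL₁
  obtain ⟨-, hP₂ne, -, -⟩ := hL₂
  obtain ⟨p₁, hp₁mem⟩ := hP₁ne
  obtain ⟨p₂, hp₂mem⟩ := hP₂ne
  rw [hP₁def] at hp₁mem
  rw [hP₂def] at hp₂mem
  have hp₁ : ∀ e ∈ E₁, p₁ e.2 - p₁ e.1 ≤ γ₁ e := hp₁mem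
  have hp₂ : ∀ e ∈ E₂, p₂ e.2 - p₂ e.1 ≤ γ₂ e := hp₂mem
  ext x
  simp only [Set.mem_setOf_eq]
  constructor
  · rintro hxmem m i j hinj
    rw [Set.mem_add] at hxmem
    obtain ⟨y₁, hy₁, y₂, hy₂, hsum⟩ := hxmem
    rw [hP₁def] at hy₁
    rw [hP₂def] at hy₂
    simp only [Set.mem_setOf_eq] at hy₁ hy₂
    have h1 : ∀ r : Fin (m+1),
        ((y₁ (j r) - y₁ (i r) : ℝ) : EReal) ≤ pathLambda E₁ γ₁ (i r) (j r) :=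
      fun r => le_lam hy₁ _ _
    have h2 : ∀ r : Fin (m+1),
        ((y₂ (j r) - y₂ (i (r+1)) : ℝ) : EReal) ≤ pathLambda E₂ γ₂ (i (r+1)) (j r) :=
      fun r => le_lam hy₂ _ _
    have hxv : ∀ v, x v = y₁ v + y₂ v := fun v => by rw [← hsum]; rfl
    have hreal : ∑ r : Fin (m+1), (x (j r) - x (i r))
        = ∑ r : Fin (m+1), ((y₁ (j r) - y₁ (i r)) + (y₂ (j r) - y₂ (i (r+1)))) := by
      calc ∑ r : Fin (m+1), (x (j r) - x (i r))
          = ∑ r : Fin (m+1), ((y₁ (j r) - y₁ (i r)) + (y₂ (j r) - y₂ (i r))) :=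
            Finset.sum_congr rfl fun r _ => by rw [hxv (j r), hxv (i r)]; ring
        _ = (∑ r : Fin (m+1), (y₁ (j r) - y₁ (i r)))
            + ∑ r : Fin (m+1), (y₂ (j r) - y₂ (i r)) := Finset.sum_add_distrib
        _ = (∑ r : Fin (m+1), (y₁ (j r) - y₁ (i r)))
            + ∑ r : Fin (m+1), (y₂ (j r) - y₂ (i (r+1))) := by
            congr 1
            rw [Finset.sum_sub_distrib, Finset.sum_sub_distrib,
              sum_shift (fun v => y₂ (i v))]
        _ = ∑ r : Fin (m+1), ((y₁ (j r) - y₁ (i r)) + (y₂ (j r) - y₂ (i (r+1)))) :=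
            Finset.sum_add_distrib.symm
    rw [hreal, coe_fsum]
    refine Finset.sum_le_sum fun r _ => ?_
    rw [EReal.coe_add]
    exact add_le_add (h1 r) (h2 r)
  · intro hx
    obtain ⟨y, hy1, hy2⟩ := main_rev E₁ E₂ γ₁ γ₂ p₁ p₂ hp₁ hp₂ x hx
    rw [Set.mem_add]
    refine ⟨y, ?_, x - y, ?_, by funext v; simp⟩
    · rw [hP₁def]
      exact hy1
    · rw [hP₂def]
      intro e he
      exact hy2 e he
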